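/- Let {v_N} ⊂ L²_{ℝ^r}(Ω) be a sequence of mean-zero r-dimensional random vectors with E[v_N v_Nᵀ] = I_r that generates a Cauchy sequence of subspaces, meaning: writing the orthogonal decomposition v_M = A_{MN} v_N + ρ_{MN} (with ρ_{MN} uncorrelated with v_N), for every ε > 0 there exists M_ε such that trace(Cov(ρ_{MN})) < ε for all N, M > M_ε. Let Y ∈ L²_H(Ω) and Y_N = Proj_H(Y | v_N). Then {Y_N} converges in L²_H(Ω). -/

import Mathlib

open MeasureTheory Filter

open scoped ENNReal NNReal

section Aux
variable {Ω : Type*} [MeasurableSpace Ω] {μ : Measure Ω}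
variable {H : Type*} [NormedAddCommGroup H] [InnerProductSpace ℝ H]

omit [InnerProductSpace ℝ H] in
lemma lp_coeFn_sum {ι : Type*} (s : Finset ι) (f : ι → Lp H 2 μ) :
    ⇑(∑ i ∈ s, f i) =ᵐ[μ] fun ω => ∑ i ∈ s, f i ω := by
  classical
  induction s using Finset.induction_on with
  | empty => simp only [Finset.sum_empty]; exact Lp.coeFn_zero H 2 μ
  | @insert a s ha ih =>
      rw [Finset.sum_insert ha]
      filter_upwards [Lp.coeFn_add (f a) (∑ i ∈ s, f i), ih] with ω h1 h2
      rw [h1, Pi.add_apply, h2, Finset.sum_insert ha]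

lemma lp_norm_sq (g : Lp H 2 μ) : ‖g‖ ^ 2 = ∫ ω, ‖g ω‖ ^ 2 ∂μ := by
  rw [← real_inner_self_eq_norm_sq, L2.inner_def]
  simp_rw [real_inner_self_eq_norm_sq]

end Aux

theorem stmt12 {Ω : Type*} [MeasurableSpace Ω] (μ : Measure Ω) [IsProbabilityMeasure μ]
    {H : Type*} [NormedAddCommGroup H] [InnerProductSpace ℝ H] [CompleteSpace H]
    [TopologicalSpace.SeparableSpace H]
    (r : ℕ) (v : ℕ → Ω → Fin r → ℝ)
    (hv2 : ∀ N l, MemLp (fun ω => v N ω l) 2 μ)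
    (hvmean : ∀ N l, ∫ ω, v N ω l ∂μ = 0)
    (hvI : ∀ N l k, ∫ ω, v N ω l * v N ω k ∂μ = if l = k then 1 else 0)
    (hcauchy : ∀ ε > 0, ∃ Mε : ℕ, ∀ M N, Mε < M → Mε < N →
      ∫ ω, ∑ l, (v M ω l - ∑ k, (∫ ω', v M ω' l * v N ω' k ∂μ) * v N ω k) ^ 2 ∂μ < ε)
    (Y : Ω → H) (hY : MemLp Y 2 μ)
    (Yproj : ℕ → Ω → H)
    (hYproj : ∀ N ω, Yproj N ω = ∑ l, v N ω l • (∫ ω', v N ω' l • Y ω' ∂μ)) :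
    ∃ Z : Ω → H, MemLp Z 2 μ ∧
      Tendsto (fun N => ∫ ω, ‖Yproj N ω - Z ω‖ ^ 2 ∂μ) atTop (nhds 0) := by
  classical
  have h111 : (1 : ℝ≥0∞) / 1 = 1 / 2 + 1 / 2 := by norm_num [ENNReal.inv_two_add_inv_two]
  -- integrability of `v • Y`
  have hvY : ∀ (a : Ω → ℝ), MemLp a 2 μ → Integrable (fun ω => a ω • Y ω) μ := fun a ha =>
    memLp_one_iff_integrable.1 (hY.smul ha : MemLp _ 1 μ)
  -- the coefficients
  set c : ℕ → Fin r → H := fun N l => ∫ ω, v N ω l • Y ω ∂μ with hc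
  have hGmem : ∀ (a : Ω → ℝ), MemLp a 2 μ → ∀ x : H, MemLp (fun ω => a ω • x) 2 μ :=
    fun a ha x => ((memLp_top_const x).smul ha : MemLp _ 2 μ)
  set YL : Lp H 2 μ := hY.toLp Y with hYL
  set F : ℕ → Lp H 2 μ :=
    fun N => ∑ l, ((hGmem _ (hv2 N l) (c N l)).toLp (fun ω => v N ω l • c N l)) with hFdef
  -- inner product computations
  have innerG : ∀ (a b : Ω → ℝ) (ha : MemLp a 2 μ) (hb : MemLp b 2 μ) (x y : H),
      inner (𝕜 := ℝ) ((hGmem a ha x).toLp _) ((hGmem b hb y).toLp _)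
        = (∫ ω, a ω * b ω ∂μ) * inner (𝕜 := ℝ) x y := by
    intro a b ha hb x y
    have hae : (fun ω => inner (𝕜 := ℝ) (((hGmem a ha x).toLp _ : Lp H 2 μ) ω)
          (((hGmem b hb y).toLp _ : Lp H 2 μ) ω))
        =ᵐ[μ] fun ω => (a ω * b ω) * inner (𝕜 := ℝ) x y := by
      filter_upwards [(hGmem a ha x).coeFn_toLp, (hGmem b hb y).coeFn_toLp] with ω h1 h2
      rw [h1, h2, real_inner_smul_left, real_inner_smul_right]; ring
    rw [L2.inner_def, integral_congr_ae hae, integral_mul_const]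
  have innerY : ∀ (a : Ω → ℝ) (ha : MemLp a 2 μ) (x : H),
      inner (𝕜 := ℝ) YL ((hGmem a ha x).toLp _)
        = inner (𝕜 := ℝ) (∫ ω, a ω • Y ω ∂μ) x := by
    intro a ha x
    have hae : (fun ω => inner (𝕜 := ℝ) (YL ω) (((hGmem a ha x).toLp _ : Lp H 2 μ) ω))
        =ᵐ[μ] fun ω => inner (𝕜 := ℝ) x (a ω • Y ω) := by
      rw [hYL]
      filter_upwards [hY.coeFn_toLp, (hGmem a ha x).coeFn_toLp] with ω h1 h2
      rw [h1, h2, real_inner_smul_right, real_inner_smul_right, real_inner_comm]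
    rw [L2.inner_def, integral_congr_ae hae, integral_inner (hvY a ha) x]
    exact real_inner_comm _ _
  have hFinner : ∀ N M, inner (𝕜 := ℝ) (F N) (F M)
      = ∑ l, ∑ k, (∫ ω, v N ω l * v M ω k ∂μ) * inner (𝕜 := ℝ) (c N l) (c M k) := by
    intro N M
    rw [hFdef]
    rw [sum_inner]
    refine Finset.sum_congr rfl fun l _ => ?_
    rw [inner_sum]
    exact Finset.sum_congr rfl fun k _ => innerG _ _ (hv2 N l) (hv2 M k) _ _
  have hFY : ∀ M, inner (𝕜 := ℝ) YL (F M) = ∑ l, ‖c M l‖ ^ 2 := by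
    intro M
    rw [hFdef, inner_sum]
    refine Finset.sum_congr rfl fun l _ => ?_
    rw [innerY _ (hv2 M l)]
    rw [hc]
    exact real_inner_self_eq_norm_sq _
  have hFF : ∀ N, inner (𝕜 := ℝ) (F N) (F N) = ∑ l, ‖c N l‖ ^ 2 := by
    intro N
    rw [hFinner N N]
    refine Finset.sum_congr rfl fun l _ => ?_
    rw [Finset.sum_eq_single l]
    · rw [hvI N l l, if_pos rfl, one_mul, real_inner_self_eq_norm_sq]
    · intro k _ hk
      rw [hvI N l k, if_neg (Ne.symm hk), zero_mul]
    · intro h; exact absurd (Finset.mem_univ l) h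
  have hBessel : ∀ N, ∑ l, ‖c N l‖ ^ 2 ≤ ‖YL‖ ^ 2 := by
    intro N
    have h0 : (0:ℝ) ≤ ‖YL - F N‖ ^ 2 := sq_nonneg _
    have h1 := norm_sub_sq_real YL (F N)
    have h2 : ‖F N‖ ^ 2 = ∑ l, ‖c N l‖ ^ 2 := by
      rw [← real_inner_self_eq_norm_sq, hFF]
    rw [h1, hFY, h2] at h0
    linarith
  -- residuals
  set A : ℕ → ℕ → Fin r → Fin r → ℝ := fun M N l k => ∫ ω, v M ω l * v N ω k ∂μ with hA
  set ρ : ℕ → ℕ → Fin r → Ω → ℝ :=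
    fun M N l ω => v M ω l - ∑ k, A M N l k * v N ω k with hρ
  have hρ2 : ∀ M N l, MemLp (ρ M N l) 2 μ := by
    intro M N l
    rw [hρ]
    exact (hv2 M l).sub (memLp_finset_sum _ fun k _ => ((hv2 N k).const_mul _))
  set R : ℕ → ℕ → Lp H 2 μ :=
    fun M N => ∑ l, ((hGmem _ (hρ2 M N l) (c M l)).toLp (fun ω => ρ M N l ω • c M l)) with hR
  have hρY : ∀ M N l, (∫ ω, ρ M N l ω • Y ω ∂μ) = c M l - ∑ k, A M N l k • c N k := by
    intro M N l
    have h1 : (fun ω => ρ M N l ω • Y ω)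
        = fun ω => v M ω l • Y ω - ∑ k, A M N l k • (v N ω k • Y ω) := by
      funext ω
      rw [hρ]
      rw [sub_smul, Finset.sum_smul]
      congr 1
      exact Finset.sum_congr rfl fun k _ => mul_smul _ _ _
    have hint : ∀ (k : Fin r), k ∈ Finset.univ →
        Integrable (fun ω => A M N l k • (v N ω k • Y ω)) μ := fun k _ =>
      (hvY _ (hv2 N k)).smul (A M N l k)
    rw [h1, integral_sub (hvY _ (hv2 M l)) (integrable_finset_sum _ hint),
      integral_finset_sum _ hint]
    congr 1
    exact Finset.sum_congr rfl fun k _ => integral_smul _ _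
  have hRY : ∀ M N, inner (𝕜 := ℝ) YL (R M N)
      = ∑ l, (inner (𝕜 := ℝ) (c M l) (c M l)
          - ∑ k, A M N l k * inner (𝕜 := ℝ) (c N k) (c M l)) := by
    intro M N
    rw [hR, inner_sum]
    refine Finset.sum_congr rfl fun l _ => ?_
    rw [innerY _ (hρ2 M N l), hρY, inner_sub_left, sum_inner]
    congr 1
    exact Finset.sum_congr rfl fun k _ => real_inner_smul_left _ _ _
  have hkey : ∀ M N, inner (𝕜 := ℝ) (F M - F N) (F M) = inner (𝕜 := ℝ) YL (R M N) := by
    intro M N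
    rw [inner_sub_left, hFF M, hFinner N M, hRY M N, Finset.sum_sub_distrib]
    congr 1
    · exact Finset.sum_congr rfl fun l _ => (real_inner_self_eq_norm_sq _).symm
    · rw [Finset.sum_comm]
      refine Finset.sum_congr rfl fun l _ => Finset.sum_congr rfl fun k _ => ?_
      congr 1
      rw [hA]
      exact integral_congr_ae (ae_of_all _ fun ω => mul_comm _ _)
  have hRnorm : ∀ M N, ‖R M N‖ ≤
      Real.sqrt (∫ ω, ∑ l, ρ M N l ω ^ 2 ∂μ) * ‖YL‖ := by
    intro M N
    have hnn : ∀ l, (0:ℝ) ≤ ∫ ω, ρ M N l ω ^ 2 ∂μ :=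
      fun l => integral_nonneg fun ω => sq_nonneg _
    have h1 : ‖R M N‖ ≤ ∑ l, Real.sqrt (∫ ω, ρ M N l ω ^ 2 ∂μ) * ‖c M l‖ := by
      rw [hR]
      refine (norm_sum_le _ _).trans ?_
      refine Finset.sum_le_sum fun l _ => le_of_eq ?_
      have hsq : ‖((hGmem _ (hρ2 M N l) (c M l)).toLp (fun ω => ρ M N l ω • c M l) : Lp H 2 μ)‖ ^ 2
          = (∫ ω, ρ M N l ω ^ 2 ∂μ) * ‖c M l‖ ^ 2 := by
        rw [← real_inner_self_eq_norm_sq, innerG _ _ (hρ2 M N l) (hρ2 M N l),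
          real_inner_self_eq_norm_sq]
        congr 1
        exact integral_congr_ae (ae_of_all _ fun ω => (sq (ρ M N l ω)).symm)
      calc ‖((hGmem _ (hρ2 M N l) (c M l)).toLp (fun ω => ρ M N l ω • c M l) : Lp H 2 μ)‖
          = Real.sqrt (‖((hGmem _ (hρ2 M N l) (c M l)).toLp
              (fun ω => ρ M N l ω • c M l) : Lp H 2 μ)‖ ^ 2) :=
            (Real.sqrt_sq (norm_nonneg _)).symm
        _ = Real.sqrt ((∫ ω, ρ M N l ω ^ 2 ∂μ) * ‖c M l‖ ^ 2) := by rw [hsq]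
        _ = Real.sqrt (∫ ω, ρ M N l ω ^ 2 ∂μ) * Real.sqrt (‖c M l‖ ^ 2) :=
            Real.sqrt_mul (hnn l) _
        _ = Real.sqrt (∫ ω, ρ M N l ω ^ 2 ∂μ) * ‖c M l‖ := by
            rw [Real.sqrt_sq (norm_nonneg _)]
    refine h1.trans ?_
    have h2 := Real.sum_mul_le_sqrt_mul_sqrt Finset.univ
      (fun l => Real.sqrt (∫ ω, ρ M N l ω ^ 2 ∂μ)) (fun l => ‖c M l‖)
    simp only [Real.sq_sqrt (hnn _)] at h2
    refine h2.trans ?_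
    have e3 : ∑ l, ∫ ω, ρ M N l ω ^ 2 ∂μ = ∫ ω, ∑ l, ρ M N l ω ^ 2 ∂μ :=
      (integral_finset_sum _ (fun l _ => (hρ2 M N l).integrable_sq)).symm
    rw [e3]
    refine mul_le_mul_of_nonneg_left ?_ (Real.sqrt_nonneg _)
    have := Real.sqrt_le_sqrt (hBessel M)
    rwa [Real.sqrt_sq (norm_nonneg YL)] at this
  have hest : ∀ M N, ‖F M - F N‖ ^ 2 ≤
      (Real.sqrt (∫ ω, ∑ l, ρ M N l ω ^ 2 ∂μ)
        + Real.sqrt (∫ ω, ∑ l, ρ N M l ω ^ 2 ∂μ)) * ‖YL‖ ^ 2 := by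
    intro M N
    have e1 : ∀ M N, inner (𝕜 := ℝ) (F M - F N) (F M)
        ≤ Real.sqrt (∫ ω, ∑ l, ρ M N l ω ^ 2 ∂μ) * ‖YL‖ ^ 2 := by
      intro M N
      rw [hkey M N]
      refine (real_inner_le_norm _ _).trans ?_
      calc ‖YL‖ * ‖R M N‖
          ≤ ‖YL‖ * (Real.sqrt (∫ ω, ∑ l, ρ M N l ω ^ 2 ∂μ) * ‖YL‖) :=
            mul_le_mul_of_nonneg_left (hRnorm M N) (norm_nonneg _)
        _ = Real.sqrt (∫ ω, ∑ l, ρ M N l ω ^ 2 ∂μ) * ‖YL‖ ^ 2 := by ring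
    have hsplit : ‖F M - F N‖ ^ 2
        = inner (𝕜 := ℝ) (F M - F N) (F M) + inner (𝕜 := ℝ) (F N - F M) (F N) := by
      rw [← real_inner_self_eq_norm_sq]
      rw [inner_sub_right, inner_sub_left, inner_sub_left, inner_sub_left]
      ring
    rw [hsplit]
    have := e1 M N
    have := e1 N M
    linarith [e1 M N, e1 N M]
  -- Cauchy sequence
  have hcs : CauchySeq F := by
    rw [Metric.cauchySeq_iff]
    intro δ hδ
    have hBpos : (0:ℝ) < ‖YL‖ ^ 2 + 1 := by positivity
    set q : ℝ := δ ^ 2 / (2 * (‖YL‖ ^ 2 + 1)) with hqdef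
    have hqpos : 0 < q := by positivity
    obtain ⟨K, hK⟩ := hcauchy (q ^ 2) (by positivity)
    refine ⟨K + 1, fun m hm n hn => ?_⟩
    have E : ∀ M N, K < M → K < N → Real.sqrt (∫ ω, ∑ l, ρ M N l ω ^ 2 ∂μ) ≤ q := by
      intro M N h1 h2
      have hT : (∫ ω, ∑ l, ρ M N l ω ^ 2 ∂μ) ≤ q ^ 2 := by
        have := hK M N h1 h2
        simp only [hρ, hA]
        exact this.le
      calc Real.sqrt (∫ ω, ∑ l, ρ M N l ω ^ 2 ∂μ) ≤ Real.sqrt (q ^ 2) :=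
            Real.sqrt_le_sqrt hT
        _ = q := Real.sqrt_sq hqpos.le
    rw [dist_eq_norm]
    have h3 : ‖F m - F n‖ ^ 2 < δ ^ 2 := by
      have h4 := hest m n
      have h5 := E m n (by omega) (by omega)
      have h6 := E n m (by omega) (by omega)
      have h7 : q * (2 * (‖YL‖ ^ 2 + 1)) = δ ^ 2 :=
        div_mul_cancel₀ _ (ne_of_gt (by positivity))
      nlinarith [sq_nonneg ‖YL‖, Real.sqrt_nonneg (∫ ω, ∑ l, ρ m n l ω ^ 2 ∂μ),
        Real.sqrt_nonneg (∫ ω, ∑ l, ρ n m l ω ^ 2 ∂μ)]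
    exact lt_of_pow_lt_pow_left₀ 2 hδ.le h3
  obtain ⟨ZL, hZ⟩ := cauchySeq_tendsto_of_complete hcs
  refine ⟨⇑ZL, Lp.memLp ZL, ?_⟩
  have hFcoe : ∀ N, ⇑(F N) =ᵐ[μ] Yproj N := by
    intro N
    rw [hFdef]
    refine (lp_coeFn_sum _ _).trans ?_
    have hall : ∀ᵐ ω ∂μ, ∀ l : Fin r,
        ((hGmem _ (hv2 N l) (c N l)).toLp (fun ω => v N ω l • c N l) : Lp H 2 μ) ω
          = v N ω l • c N l :=
      ae_all_iff.2 fun l => (hGmem _ (hv2 N l) (c N l)).coeFn_toLp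
    filter_upwards [hall] with ω hω
    rw [hYproj]
    exact Finset.sum_congr rfl fun l _ => hω l
  have heq : ∀ N, (∫ ω, ‖Yproj N ω - ZL ω‖ ^ 2 ∂μ) = ‖F N - ZL‖ ^ 2 := by
    intro N
    rw [lp_norm_sq (F N - ZL)]
    refine integral_congr_ae ?_
    filter_upwards [Lp.coeFn_sub (F N) ZL, hFcoe N] with ω h1 h2
    rw [h1, Pi.sub_apply, h2]
  have hnorm0 : Tendsto (fun N => ‖F N - ZL‖) atTop (nhds 0) :=
    tendsto_iff_norm_sub_tendsto_zero.1 hZ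
  have hsq0 : Tendsto (fun N => ‖F N - ZL‖ ^ 2) atTop (nhds 0) := by
    have := hnorm0.pow 2
    simpa using this
  simp only [heq]
  exact hsq0
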